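/- Let α₁ > 0, α₂ > 0, β > −1, and 0 < c < 1. Define the moments of the generalized Hahn weight of type I by μ_n(c) = Σ_{x=0}^∞ x^n · (α₁)_x·(α₂)_x · c^x/((β+1)_x · x!) for n ∈ ℕ (these series converge absolutely for |c| < 1). Then (1 − c)·μ₂(c) = α₁·α₂·c·μ₀(c) + ((α₁ + α₂)·c − β)·μ₁(c). -/

import Mathlib

/-- The Pochhammer symbol (rising factorial) `(a)_x = a (a+1) ⋯ (a+x-1)`. -/
def poch (a : ℝ) (x : ℕ) : ℝ := ∏ i ∈ Finset.range x, (a + i)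

lemma poch_succ (a : ℝ) (x : ℕ) : poch a (x+1) = poch a x * (a + x) := by
  simp [poch, Finset.prod_range_succ]

lemma poch_pos {a : ℝ} (ha : 0 < a) (x : ℕ) : 0 < poch a x := by
  apply Finset.prod_pos
  intro i _
  positivity

lemma tendsto_quot (a b : ℝ) :
    Filter.Tendsto (fun x : ℕ => (((x:ℝ))+a)/(((x:ℝ))+b)) Filter.atTop (nhds 1) := by
  have h1 : Filter.Tendsto (fun x : ℕ => (1 + a/(x:ℝ))/(1 + b/(x:ℝ))) Filter.atTop (nhds 1) := by
    have ha := tendsto_const_div_atTop_nhds_zero_nat a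
    have hb := tendsto_const_div_atTop_nhds_zero_nat b
    have h2 : Filter.Tendsto (fun x : ℕ => (1 + a/(x:ℝ))) Filter.atTop (nhds (1+0)) :=
      tendsto_const_nhds.add ha
    have h3 : Filter.Tendsto (fun x : ℕ => (1 + b/(x:ℝ))) Filter.atTop (nhds (1+0)) :=
      tendsto_const_nhds.add hb
    have := h2.div h3 (by norm_num)
    simpa [Pi.div_def] using this
  apply h1.congr'
  filter_upwards [Filter.eventually_gt_atTop 0] with x hx
  have hx0 : ((x:ℝ)) ≠ 0 := by positivity
  rcases eq_or_ne ((x:ℝ)+b) 0 with h | h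
  · rw [h, div_zero]
    rw [show (1 + b/(x:ℝ)) = ((x:ℝ)+b)/x by field_simp, h]
    simp
  · field_simp

lemma hahn_summable (α₁ α₂ β : ℝ) (hα₁ : 0 < α₁) (hα₂ : 0 < α₂) (hβ : β > -1)
    (n : ℕ) (t : ℝ) (ht : |t| < 1) :
    Summable fun x : ℕ =>
      (x : ℝ) ^ n * poch α₁ x * poch α₂ x * t ^ x / (poch (β + 1) x * x.factorial) := by
  have hβ1 : (0:ℝ) < β + 1 := by linarith
  rcases eq_or_ne t 0 with rfl | ht0
  · apply summable_of_ne_finset_zero (s := {0})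
    intro x hx
    have hx1 : x ≠ 0 := by simpa using hx
    simp [zero_pow hx1]
  · set f : ℕ → ℝ := fun x =>
      (x : ℝ) ^ n * poch α₁ x * poch α₂ x * t ^ x / (poch (β + 1) x * x.factorial) with hf
    apply summable_of_ratio_test_tendsto_lt_one (l := |t|) ht
    · filter_upwards [Filter.eventually_ge_atTop 1] with x hx
      have hx0 : (0:ℝ) < x := by exact_mod_cast hx
      have h1 := poch_pos hα₁ x
      have h2 := poch_pos hα₂ x
      have h3 := poch_pos hβ1 x
      have h4 : (0:ℝ) < x.factorial := by exact_mod_cast x.factorial_pos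
      have h5 : t ^ x ≠ 0 := pow_ne_zero _ ht0
      simp only [hf]
      positivity
    · have key : ∀ x : ℕ, 1 ≤ x → ‖f (x+1)‖ / ‖f x‖ =
          (((x:ℝ)+1)/x)^n * ((α₁+x)/((x:ℝ)+1)) * ((α₂+x)/(β+1+x)) * |t| := by
        intro x hx
        have hx0 : (0:ℝ) < x := by exact_mod_cast hx
        have h1 := poch_pos hα₁ x
        have h2 := poch_pos hα₂ x
        have h3 := poch_pos hβ1 x
        have h4 : (0:ℝ) < (x.factorial : ℝ) := by exact_mod_cast x.factorial_pos
        have habs : ∀ m : ℕ, ‖f m‖ =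
            (m : ℝ) ^ n * poch α₁ m * poch α₂ m * |t| ^ m / (poch (β + 1) m * m.factorial) := by
          intro m
          have g1 := poch_pos hα₁ m
          have g2 := poch_pos hα₂ m
          have g3 := poch_pos hβ1 m
          have g4 : (0:ℝ) < (m.factorial : ℝ) := by exact_mod_cast m.factorial_pos
          rw [hf]
          rw [Real.norm_eq_abs, abs_div, abs_mul, abs_mul, abs_mul, abs_pow, abs_pow,
            abs_mul, Nat.abs_cast, abs_of_pos g1, abs_of_pos g2, abs_of_pos g3,
            abs_of_pos g4]
        rw [habs, habs]
        rw [poch_succ, poch_succ, poch_succ, Nat.factorial_succ]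
        have ht' : (0:ℝ) < |t| := abs_pos.mpr ht0
        push_cast
        rw [div_pow]
        field_simp
        ring
      have hlim : Filter.Tendsto (fun x : ℕ =>
          (((x:ℝ)+1)/x)^n * ((α₁+x)/((x:ℝ)+1)) * ((α₂+x)/(β+1+x)) * |t|)
          Filter.atTop (nhds (|t|)) := by
        have e1 : Filter.Tendsto (fun x : ℕ => (((x:ℝ)+1)/x)^n) Filter.atTop (nhds 1) := by
          have := (tendsto_quot 1 0).pow n
          simpa using this
        have e2 := tendsto_quot α₁ 1
        have e3 := tendsto_quot α₂ (β+1)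
        have e2' : Filter.Tendsto (fun x : ℕ => (α₁+(x:ℝ))/((x:ℝ)+1)) Filter.atTop (nhds 1) := by
          apply e2.congr; intro x; ring_nf
        have e3' : Filter.Tendsto (fun x : ℕ => (α₂+(x:ℝ))/(β+1+(x:ℝ))) Filter.atTop (nhds 1) := by
          apply e3.congr; intro x; ring_nf
        have := ((e1.mul e2').mul e3').mul (tendsto_const_nhds (x := |t|))
        simpa using this
      apply hlim.congr'
      filter_upwards [Filter.eventually_ge_atTop 1] with x hx
      exact (key x hx).symm

/-- The moments of the generalized Hahn weight of type I satisfy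
`(1-c) μ₂(c) = α₁ α₂ c μ₀(c) + ((α₁+α₂) c - β) μ₁(c)`; the defining series
converge absolutely for `|c| < 1`. -/
theorem generalized_hahn_I_moment_relation
    (α₁ α₂ β c : ℝ) (hα₁ : 0 < α₁) (hα₂ : 0 < α₂) (hβ : β > -1)
    (hc : 0 < c) (hc1 : c < 1)
    (mu : ℕ → ℝ → ℝ)
    (hmu : ∀ (n : ℕ) (t : ℝ),
      mu n t = ∑' x : ℕ,
        (x : ℝ) ^ n * poch α₁ x * poch α₂ x * t ^ x / (poch (β + 1) x * x.factorial)) :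
    (∀ (n : ℕ) (t : ℝ), |t| < 1 →
      Summable fun x : ℕ =>
        |(x : ℝ) ^ n * poch α₁ x * poch α₂ x * t ^ x / (poch (β + 1) x * x.factorial)|) ∧
    (1 - c) * mu 2 c = α₁ * α₂ * c * mu 0 c + ((α₁ + α₂) * c - β) * mu 1 c := by
  have hβ1 : (0:ℝ) < β + 1 := by linarith
  have hcabs : |c| < 1 := by rw [abs_of_pos hc]; exact hc1
  constructor
  · intro n t ht
    exact (summable_abs_iff).mpr (hahn_summable α₁ α₂ β hα₁ hα₂ hβ n t ht)
  · set f : ℕ → ℕ → ℝ := fun n x =>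
      (x : ℝ) ^ n * poch α₁ x * poch α₂ x * c ^ x / (poch (β + 1) x * x.factorial) with hfdef
    have hs : ∀ n, Summable (f n) := fun n => hahn_summable α₁ α₂ β hα₁ hα₂ hβ n c hcabs
    have key : ∀ x : ℕ, f 2 (x+1) + β * f 1 (x+1) =
        c*α₁*α₂ * f 0 x + c*(α₁+α₂) * f 1 x + c * f 2 x := by
      intro x
      have h3 := poch_pos hβ1 x
      have h4 : (0:ℝ) < (x.factorial : ℝ) := by exact_mod_cast x.factorial_pos
      simp only [hfdef]
      rw [poch_succ, poch_succ, poch_succ, Nat.factorial_succ]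
      push_cast
      field_simp
      ring
    have hF : Summable (fun x => f 2 x + β * f 1 x) := (hs 2).add ((hs 1).mul_left β)
    have hshift := Summable.tsum_eq_zero_add hF
    have hz : f 2 0 + β * f 1 0 = 0 := by simp [hfdef, poch]
    have hRseq : Summable (fun x => c*α₁*α₂ * f 0 x + c*(α₁+α₂) * f 1 x + c * f 2 x) :=
      (((hs 0).mul_left _).add ((hs 1).mul_left _)).add ((hs 2).mul_left c)
    have hmain : (∑' x, f 2 x) + β * (∑' x, f 1 x) =
        c*α₁*α₂ * (∑' x, f 0 x) + c*(α₁+α₂) * (∑' x, f 1 x) + c * (∑' x, f 2 x) := by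
      have h1 : ∑' x, (f 2 x + β * f 1 x) = (∑' x, f 2 x) + β * (∑' x, f 1 x) := by
        rw [Summable.tsum_add (hs 2) ((hs 1).mul_left β), tsum_mul_left]
      have h2 : ∑' x : ℕ, (f 2 (x+1) + β * f 1 (x+1)) =
          ∑' x, (c*α₁*α₂ * f 0 x + c*(α₁+α₂) * f 1 x + c * f 2 x) := tsum_congr key
      have h3 : ∑' x, (c*α₁*α₂ * f 0 x + c*(α₁+α₂) * f 1 x + c * f 2 x) =
          c*α₁*α₂ * (∑' x, f 0 x) + c*(α₁+α₂) * (∑' x, f 1 x) + c * (∑' x, f 2 x) := by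
        rw [Summable.tsum_add (((hs 0).mul_left _).add ((hs 1).mul_left _)) ((hs 2).mul_left c),
          Summable.tsum_add ((hs 0).mul_left _) ((hs 1).mul_left _), tsum_mul_left, tsum_mul_left,
          tsum_mul_left]
      rw [← h1, hshift, hz, zero_add, h2, h3]
    rw [hmu, hmu, hmu]
    linear_combination hmain
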